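/- Let G be a nonabelian finite 2-group such that the natural action of the automorphism group Aut(G) on G has exactly three orbits. Then G has exponent 4, the three automorphism orbits are exactly the sets of elements of order 1, of order 2, and of order 4, and the center, the commutator subgroup and the Frattini subgroup of G all coincide and are equal to the set of elements of G of order dividing 2 (in particular, both the Frattini subgroup Φ(G) and the quotient G/Φ(G) are elementary abelian 2-groups). -/

import Mathlib

open MulAction Subgroup
open scoped commutatorElement

private lemma mul_comm_of_sq_eq_one {H : Type*} [Group H] (h : ∀ q : H, q ^ 2 = 1)
    (a b : H) : a * b = b * a := by
  have hi : ∀ q : H, q⁻¹ = q := fun q => by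
    have := h q; rw [pow_two] at this
    exact inv_eq_of_mul_eq_one_right this
  calc a * b = (a * b)⁻¹ := (hi _).symm
    _ = b⁻¹ * a⁻¹ := mul_inv_rev a b
    _ = b * a := by rw [hi, hi]

private lemma exists_orderOf_eq_two' {H : Type*} [Group H] [Finite H]
    (hp : IsPGroup 2 H) (hnt : Nontrivial H) : ∃ t : H, orderOf t = 2 := by
  haveI : Fact (Nat.Prime 2) := ⟨Nat.prime_two⟩
  obtain ⟨n, hn⟩ := IsPGroup.iff_card.mp hp
  have hlt : 1 < Nat.card H := Finite.one_lt_card_iff_nontrivial.mpr hnt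
  have h2 : 2 ∣ Nat.card H := by
    rcases n with _ | n
    · simp [hn] at hlt
    · rw [hn]; exact dvd_pow_self 2 (Nat.succ_ne_zero n)
  exact exists_prime_orderOf_dvd_card' 2 h2


/-- If `G` is a nonabelian finite 2-group whose automorphism group acts on `G` with exactly
three orbits, then `G` has exponent 4, the orbits are exactly the sets of elements of equal
order (namely of orders 1, 2 and 4), and the center, commutator subgroup and Frattini
subgroup all coincide and equal the set of elements of order dividing 2. -/
theorem nonabelian_three_orbit_two_group_structure
    (G : Type*) [Group G] [Finite G] (hp : IsPGroup 2 G)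
    (hna : ¬ ∀ a b : G, a * b = b * a)
    (horb : Nat.card (MulAction.orbitRel.Quotient (MulAut G) G) = 3) :
    Monoid.exponent G = 4 ∧
    (∀ g h : G, h ∈ MulAction.orbit (MulAut G) g ↔ orderOf g = orderOf h) ∧
    Subgroup.center G = commutator G ∧
    Subgroup.center G = frattini G ∧
    (Subgroup.center G : Set G) = {g : G | g ^ 2 = 1} := by
  classical
  haveI : Fact (Nat.Prime 2) := ⟨Nat.prime_two⟩
  haveI hnt : Nontrivial G := by
    by_contra h
    rw [not_nontrivial_iff_subsingleton] at h
    exact hna fun a b => Subsingleton.elim _ _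
  -- orbit elements have equal order
  have horbord : ∀ {g h : G}, h ∈ orbit (MulAut G) g → orderOf h = orderOf g := by
    rintro g h ⟨f, rfl⟩
    exact orderOf_injective f.toMonoidHom f.injective g
  set Q := MulAction.orbitRel.Quotient (MulAut G) G with hQ
  let π : G → Q := Quotient.mk''
  have hπord : ∀ g h : G, π g = π h → orderOf g = orderOf h := by
    intro g h e
    exact horbord ((MulAction.orbitRel_apply).mp (Quotient.eq''.mp e))
  -- an element of order 2
  obtain ⟨y, hy2⟩ := exists_orderOf_eq_two' hp hnt
  -- an element of order > 2
  obtain ⟨x, hx⟩ : ∃ x : G, x ^ 2 ≠ 1 := by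
    by_contra h
    push_neg at h
    exact hna (mul_comm_of_sq_eq_one h)
  have hxnd : ¬ orderOf x ∣ 2 := fun hd => hx (orderOf_dvd_iff_pow_eq_one.mp hd)
  set a := orderOf x with haa
  have ha1 : a ≠ 1 := fun h => hxnd (h ▸ one_dvd 2)
  have ha2 : a ≠ 2 := fun h => hxnd (by rw [h])
  have h2a : 2 ∣ a := by
    obtain ⟨k, hk⟩ := hp x
    obtain ⟨m, _, hm⟩ := (Nat.dvd_prime_pow Nat.prime_two).mp (orderOf_dvd_of_pow_eq_one hk)
    rcases m with _ | m
    · rw [← haa, pow_zero] at hm; exact absurd hm ha1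
    · rw [← haa] at hm; rw [hm]; exact dvd_pow_self 2 (Nat.succ_ne_zero m)
  -- the three orbits
  haveI : Finite Q := Quotient.finite _
  haveI := Fintype.ofFinite Q
  have hcard : Fintype.card Q = 3 := by rw [← Nat.card_eq_fintype_card]; exact horb
  have hd1y : π 1 ≠ π y := fun e => by
    have := hπord 1 y e; rw [orderOf_one, hy2] at this; omega
  have hd1x : π 1 ≠ π x := fun e => by
    have := hπord 1 x e; rw [orderOf_one, ← haa] at this; exact ha1 this.symm
  have hdyx : π y ≠ π x := fun e => by
    have := hπord y x e; rw [hy2, ← haa] at this; exact ha2 this.symm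
  -- every class is one of the three
  have huniv : ∀ q : Q, q = π 1 ∨ q = π y ∨ q = π x := by
    intro q
    by_contra hq
    push_neg at hq
    obtain ⟨h1, h2, h3⟩ := hq
    have hle : ({q, π 1, π y, π x} : Finset Q).card ≤ 3 := hcard ▸ Finset.card_le_univ _
    rw [Finset.card_insert_of_notMem (by simp [h1, h2, h3]),
        Finset.card_insert_of_notMem (by simp [hd1y, hd1x]),
        Finset.card_insert_of_notMem (by simp [hdyx]),
        Finset.card_singleton] at hle
    omega
  have hords : ∀ g : G, orderOf g = 1 ∨ orderOf g = 2 ∨ orderOf g = a := by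
    intro g
    rcases huniv (π g) with e | e | e
    · exact Or.inl (by rw [hπord g 1 e, orderOf_one])
    · exact Or.inr (Or.inl (by rw [hπord g y e, hy2]))
    · exact Or.inr (Or.inr (hπord g x e))
  -- a = 4
  have hapos : 0 < a := orderOf_pos x
  have hx2 : orderOf (x ^ 2) = a / 2 := by
    rw [orderOf_pow, ← haa, Nat.gcd_eq_right h2a]
  have ha4 : a = 4 := by
    obtain ⟨c, hc⟩ := h2a
    rcases hords (x ^ 2) with e | e | e <;> rw [hx2] at e <;> omega
  have hx4 : orderOf x = 4 := haa.symm.trans ha4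
  have hord4 : ∀ g : G, orderOf g = 1 ∨ orderOf g = 2 ∨ orderOf g = 4 := by
    intro g
    rcases hords g with e | e | e
    · exact Or.inl e
    · exact Or.inr (Or.inl e)
    · exact Or.inr (Or.inr (e.trans ha4))
  -- exponent
  have hpow4 : ∀ g : G, g ^ 4 = 1 := by
    intro g
    apply orderOf_dvd_iff_pow_eq_one.mp
    rcases hord4 g with e | e | e <;> rw [e] <;> norm_num
  have hexp : Monoid.exponent G = 4 :=
    Nat.dvd_antisymm (Monoid.exponent_dvd_of_forall_pow_eq_one hpow4)
      (hx4 ▸ Monoid.order_dvd_exponent x)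
  -- same order implies same orbit
  have hsame : ∀ g h : G, orderOf g = orderOf h → h ∈ orbit (MulAut G) g := by
    intro g h he
    have key : π h = π g := by
      rcases huniv (π g) with e | e | e <;> rcases huniv (π h) with f | f | f <;>
          (try exact f.trans e.symm) <;>
        · exfalso
          have e' := hπord g _ e
          have f' := hπord h _ f
          simp only [orderOf_one, hy2, hx4] at e' f'
          omega
    exact (MulAction.orbitRel_apply).mp (Quotient.eq''.mp key)
  have horbiff : ∀ g h : G, h ∈ orbit (MulAut G) g ↔ orderOf g = orderOf h :=
    fun g h => ⟨fun hh => (horbord hh).symm, fun he => hsame g h he⟩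
  -- characteristic subgroups absorb order classes
  have hchar : ∀ (H : Subgroup G), H.Characteristic → ∀ z ∈ H, ∀ g : G,
      orderOf g = orderOf z → g ∈ H := by
    intro H hH z hz g he
    obtain ⟨f, rfl⟩ := hsame z g he.symm
    exact Subgroup.characteristic_iff_le_comap.mp hH f hz
  have hsq_ord : ∀ z : G, orderOf z = 4 → orderOf (z ^ 2) = 2 := by
    intro z hz
    rw [orderOf_pow, hz]
    decide
  have hmem_of_sq : ∀ (H : Subgroup G), H.Characteristic → ∀ w ∈ H, orderOf w = 2 →
      ∀ g : G, g ^ 2 = 1 → g ∈ H := by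
    intro H hH w hw hw2 g hg
    rcases hord4 g with e | e | e
    · exact (orderOf_eq_one_iff.mp e) ▸ H.one_mem
    · exact hchar H hH w hw g (e.trans hw2.symm)
    · exfalso
      have hh := orderOf_dvd_of_pow_eq_one hg
      rw [e] at hh
      norm_num at hh
  -- the center
  haveI : Nontrivial (Subgroup.center G) := hp.center_nontrivial
  obtain ⟨z, hzZ, hz1⟩ := (Subgroup.nontrivial_iff_exists_ne_one (Subgroup.center G)).mp this
  obtain ⟨w, hwZ, hw2⟩ : ∃ w ∈ Subgroup.center G, orderOf w = 2 := by
    rcases hord4 z with e | e | e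
    · exact absurd (orderOf_eq_one_iff.mp e) hz1
    · exact ⟨z, hzZ, e⟩
    · exact ⟨z ^ 2, (Subgroup.center G).pow_mem hzZ 2, hsq_ord z e⟩
  have hScenter : ∀ g : G, g ^ 2 = 1 → g ∈ Subgroup.center G :=
    hmem_of_sq _ inferInstance w hwZ hw2
  have hcenterS : ∀ g ∈ Subgroup.center G, g ^ 2 = 1 := by
    intro u hu
    by_contra huu
    have hu4 : orderOf u = 4 := by
      rcases hord4 u with e | e | e
      · exact absurd (by rw [orderOf_eq_one_iff.mp e]; exact one_pow 2) huu
      · have := pow_orderOf_eq_one u; rw [e] at this; exact absurd this huu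
      · exact e
    apply hna
    intro b c
    have hall : ∀ g : G, g ∈ Subgroup.center G := by
      intro g
      rcases hord4 g with e | e | e
      · exact (orderOf_eq_one_iff.mp e) ▸ (Subgroup.center G).one_mem
      · exact hchar _ inferInstance w hwZ g (e.trans hw2.symm)
      · exact hchar _ inferInstance u hu g (e.trans hu4.symm)
    exact Subgroup.mem_center_iff.mp (hall c) b
  have hZS : (Subgroup.center G : Set G) = {g : G | g ^ 2 = 1} :=
    Set.ext fun g => ⟨fun h => hcenterS g h, fun h => hScenter g h⟩
  -- commutator subgroup
  have hsqZ : ∀ g : G, g ^ 2 ∈ Subgroup.center G := fun g =>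
    hScenter _ (by rw [← pow_mul]; exact hpow4 g)
  have hcommZ : ∀ g h : G, ⁅g, h⁆ ∈ Subgroup.center G := by
    intro g h
    have hq : ∀ q : G ⧸ Subgroup.center G, q ^ 2 = 1 := by
      intro q
      induction q using QuotientGroup.induction_on with
      | _ g' =>
        rw [← QuotientGroup.mk_pow]
        exact (QuotientGroup.eq_one_iff _).mpr (hsqZ g')
    have hmk : ((⁅g, h⁆ : G) : G ⧸ Subgroup.center G) = 1 := by
      have hmap : ((⁅g, h⁆ : G) : G ⧸ Subgroup.center G) =
          ⁅((g : G) : G ⧸ Subgroup.center G), ((h : G) : G ⧸ Subgroup.center G)⁆ :=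
        map_commutatorElement (QuotientGroup.mk' (Subgroup.center G)) g h
      rw [hmap, commutatorElement_eq_one_iff_mul_comm]
      exact mul_comm_of_sq_eq_one hq _ _
    exact (QuotientGroup.eq_one_iff _).mp hmk
  have hCle : commutator G ≤ Subgroup.center G := by
    rw [_root_.commutator_def, Subgroup.commutator_le]
    exact fun g _ h _ => hcommZ g h
  obtain ⟨g0, h0, hgh⟩ : ∃ g h : G, ⁅g, h⁆ ≠ 1 := by
    by_contra hc
    push_neg at hc
    exact hna fun b c => commutatorElement_eq_one_iff_mul_comm.mp (hc b c)
  have hcmem : ⁅g0, h0⁆ ∈ commutator G :=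
    Subgroup.commutator_mem_commutator (Subgroup.mem_top g0) (Subgroup.mem_top h0)
  have hc2 : orderOf ⁅g0, h0⁆ = 2 := by
    have hsq := hcenterS _ (hCle hcmem)
    rcases hord4 ⁅g0, h0⁆ with e | e | e
    · exact absurd (orderOf_eq_one_iff.mp e) hgh
    · exact e
    · have hh := orderOf_dvd_of_pow_eq_one hsq
      rw [e] at hh
      norm_num at hh
  have hZC : Subgroup.center G = commutator G :=
    le_antisymm
      (fun u hu => hmem_of_sq (commutator G) inferInstance _ hcmem hc2 u (hcenterS u hu))
      hCle
  -- frattini subgroup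
  haveI : Group.IsNilpotent G := hp.isNilpotent
  have hnc : NormalizerCondition G := normalizerCondition_of_isNilpotent
  have hsqM : ∀ (g : G) (M : Subgroup G), IsCoatom M → g ^ 2 ∈ M := by
    intro g M hM
    haveI hMn : M.Normal := Subgroup.NormalizerCondition.normal_of_coatom M hnc hM
    haveI : Nontrivial (G ⧸ M) := by
      obtain ⟨u, hu⟩ : ∃ u : G, u ∉ M := by
        by_contra hcc
        push_neg at hcc
        exact hM.1 ((Subgroup.eq_top_iff' M).mpr hcc)
      exact ⟨⟨(u : G ⧸ M), 1, fun e => hu ((QuotientGroup.eq_one_iff u).mp e)⟩⟩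
    obtain ⟨t, ht⟩ := exists_orderOf_eq_two' (hp.to_quotient M) inferInstance
    set K' : Subgroup G := (Subgroup.zpowers t).comap (QuotientGroup.mk' M) with hK'
    have hMK' : M ≤ K' := by
      intro m hm
      rw [hK', Subgroup.mem_comap]
      have : (QuotientGroup.mk' M) m = 1 := (QuotientGroup.eq_one_iff m).mpr hm
      rw [this]
      exact Subgroup.one_mem _
    rcases hMK'.lt_or_eq with hlt | heq
    · have hK'top : K' = ⊤ := hM.2 _ hlt
      have hgK : (g : G ⧸ M) ∈ Subgroup.zpowers t := by
        have : g ∈ K' := hK'top ▸ Subgroup.mem_top g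
        rwa [hK', Subgroup.mem_comap] at this
      have hdvd : orderOf ((g : G ⧸ M)) ∣ 2 := ht ▸ orderOf_dvd_of_mem_zpowers hgK
      have : ((g : G ⧸ M)) ^ 2 = 1 := orderOf_dvd_iff_pow_eq_one.mp hdvd
      rw [← QuotientGroup.mk_pow] at this
      exact (QuotientGroup.eq_one_iff _).mp this
    · exfalso
      obtain ⟨s, hs⟩ := QuotientGroup.mk'_surjective M t
      have hsK' : s ∈ K' := by
        rw [hK', Subgroup.mem_comap, hs]
        exact Subgroup.mem_zpowers t
      rw [← heq] at hsK'
      have : t = 1 := by rw [← hs]; exact (QuotientGroup.eq_one_iff s).mpr hsK'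
      rw [this, orderOf_one] at ht
      omega
  have hsqF : ∀ g : G, g ^ 2 ∈ frattini G := by
    intro g
    rw [frattini, Order.radical]
    rw [Subgroup.mem_iInf]
    intro M
    rw [Subgroup.mem_iInf]
    intro hM
    exact hsqM g M hM
  have hx2F : x ^ 2 ∈ frattini G := hsqF x
  have hx2ord : orderOf (x ^ 2) = 2 := hsq_ord x hx4
  have hZF : Subgroup.center G ≤ frattini G := fun u hu =>
    hmem_of_sq (frattini G) inferInstance _ hx2F hx2ord u (hcenterS u hu)
  have hFZ : frattini G ≤ Subgroup.center G := by
    intro u hu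
    apply hScenter
    by_contra huu
    have hu4 : orderOf u = 4 := by
      rcases hord4 u with e | e | e
      · exact absurd (by rw [orderOf_eq_one_iff.mp e]; exact one_pow 2) huu
      · have := pow_orderOf_eq_one u; rw [e] at this; exact absurd this huu
      · exact e
    have htop : frattini G = ⊤ := by
      rw [eq_top_iff]
      intro g _
      rcases hord4 g with e | e | e
      · exact (orderOf_eq_one_iff.mp e) ▸ (frattini G).one_mem
      · exact hchar _ inferInstance (u ^ 2) ((frattini G).pow_mem hu 2) g
          (by rw [e, hsq_ord u hu4])
      · exact hchar _ inferInstance u hu g (e.trans hu4.symm)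
    obtain ⟨M, hM, -⟩ : ∃ M : Subgroup G, IsCoatom M ∧ (⊥ : Subgroup G) ≤ M := by
      rcases (IsCoatomic.eq_top_or_exists_le_coatom (⊥ : Subgroup G)) with hbt | h
      · exfalso
        obtain ⟨v, hv⟩ := exists_ne (1 : G)
        have : v ∈ (⊥ : Subgroup G) := hbt ▸ Subgroup.mem_top v
        exact hv (Subgroup.mem_bot.mp this)
      · exact h
    exact hM.1 (top_le_iff.mp (htop ▸ frattini_le_coatom hM))
  exact ⟨hexp, horbiff, hZC, le_antisymm hZF hFZ, hZS⟩
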